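/- arXiv:1508.06933 — 4 statements merged into one kernel-verified Lean document; each statement's English description precedes it below -/
import Mathlib

section
/- For 1/2 ≤ p < 1 and λ ≥ 0, the Bernoulli(p) random variable satisfies ln((1-p)e^{-λp} + p e^{λ(1-p)}) ≤ p(1-p)λ²/2. -/
open Real

/-- Padé-type bound: `2 - x ≤ (2+x) e^{-x}` for `x ≥ 0`. -/
lemma lemA (x : ℝ) (hx : 0 ≤ x) : 2 - x ≤ (2 + x) * Real.exp (-x) := by
  set F : ℝ → ℝ := fun y => (2 + y) * Real.exp (-y) + y with hF
  have hd : ∀ y : ℝ, HasDerivAt F (1 - (1 + y) * Real.exp (-y)) y := by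
    intro y
    have h1 : HasDerivAt (fun y : ℝ => Real.exp (-y)) (-Real.exp (-y)) y := by
      exact ((Real.hasDerivAt_exp (-y)).comp y (hasDerivAt_neg y)).congr_deriv (by ring)
    have h2 : HasDerivAt (fun y : ℝ => (2 + y) * Real.exp (-y))
        (1 * Real.exp (-y) + (2 + y) * (-Real.exp (-y))) y := by
      exact (((hasDerivAt_const y (2:ℝ)).add (hasDerivAt_id y)).mul h1).congr_deriv
        (by simp only [Pi.add_apply, id_eq]; ring)
    have := h2.add (hasDerivAt_id y)
    exact this.congr_deriv (by ring)
  have hmono : MonotoneOn F (Set.Ici 0) := by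
    apply monotoneOn_of_deriv_nonneg (convex_Ici 0)
    · exact (Continuous.continuousOn (by continuity))
    · intro y hy
      exact (hd y).differentiableAt.differentiableWithinAt
    · intro y hy
      rw [(hd y).deriv]
      have hy0 : (0:ℝ) ≤ y := le_of_lt (by simpa using hy)
      have : (1 + y) * Real.exp (-y) ≤ 1 := by
        have h := Real.add_one_le_exp y
        have he : 0 < Real.exp (-y) := Real.exp_pos _
        have hmul : Real.exp y * Real.exp (-y) = 1 := by rw [← Real.exp_add]; simp
        nlinarith [mul_le_mul_of_nonneg_right h he.le]
      linarith
  have h0 : F 0 = 2 := by simp [hF]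
  have := hmono (Set.self_mem_Ici) (Set.mem_Ici.mpr hx) hx
  rw [h0] at this
  simp only [hF] at this
  linarith

/-- `e^λ (1 - p λ) ≤ 1 + (1-p) λ` for `p ≥ 1/2`, `λ ≥ 0`. -/
lemma lemB (p l : ℝ) (hp1 : 1 / 2 ≤ p) (hl : 0 ≤ l) :
    Real.exp l * (1 - p * l) ≤ 1 + (1 - p) * l := by
  have hA := lemA l hl
  have he1 : Real.exp (-l) ≤ 1 := Real.exp_le_one_iff.mpr (by linarith)
  have he0 : 0 < Real.exp (-l) := Real.exp_pos _
  -- 1 - p l ≤ e^{-l} (1 + (1-p) l)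
  have hB : 1 - p * l ≤ Real.exp (-l) * (1 + (1 - p) * l) := by
    nlinarith [mul_nonneg (mul_nonneg (sub_nonneg.mpr hp1) hl) (sub_nonneg.mpr he1)]
  have hE : 0 < Real.exp l := Real.exp_pos _
  have hmul : Real.exp l * Real.exp (-l) = 1 := by
    rw [← Real.exp_add]; simp
  have h2 := mul_le_mul_of_nonneg_left hB hE.le
  rw [← mul_assoc, hmul, one_mul] at h2
  linarith

theorem berend_kontorovich (p l : ℝ) (hp1 : 1 / 2 ≤ p) (hp2 : p < 1) (hl : 0 ≤ l) :
    Real.log ((1 - p) * Real.exp (-l * p) + p * Real.exp (l * (1 - p)))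
      ≤ p * (1 - p) * l ^ 2 / 2 := by
  have hp0 : 0 < p := by linarith
  have hq0 : 0 < 1 - p := by linarith
  -- positivity of the denominator
  have hD : ∀ x : ℝ, 0 < 1 - p + p * Real.exp x := by
    intro x; have := Real.exp_pos x; nlinarith
  set g : ℝ → ℝ := fun x => Real.log (1 - p + p * Real.exp x) - p * x - p * (1 - p) * x ^ 2 / 2 with hg
  have hd : ∀ x : ℝ, HasDerivAt g
      (p * Real.exp x / (1 - p + p * Real.exp x) - p - p * (1 - p) * x) x := by
    intro x
    have h1 : HasDerivAt (fun y : ℝ => 1 - p + p * Real.exp y) (p * Real.exp x) x := by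
      simpa using ((Real.hasDerivAt_exp x).const_mul p).const_add (1 - p)
    have h2 : HasDerivAt (fun y : ℝ => Real.log (1 - p + p * Real.exp y))
        (p * Real.exp x / (1 - p + p * Real.exp x)) x := h1.log (hD x).ne'
    have h3 : HasDerivAt (fun y : ℝ => p * y) p x := by
      simpa using (hasDerivAt_id x).const_mul p
    have h4 : HasDerivAt (fun y : ℝ => p * (1 - p) * y ^ 2 / 2) (p * (1 - p) * x) x := by
      have := ((hasDerivAt_pow 2 x).const_mul (p * (1 - p))).div_const 2
      exact this.congr_deriv (by ring)
    exact (h2.sub h3).sub h4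
  have hanti : AntitoneOn g (Set.Ici 0) := by
    apply antitoneOn_of_deriv_nonpos (convex_Ici 0)
    · have c1 : Continuous fun x : ℝ => 1 - p + p * Real.exp x := by continuity
      exact ((ContinuousOn.log c1.continuousOn (fun x _ => (hD x).ne')).sub
        (continuous_const.mul continuous_id).continuousOn).sub
        (Continuous.continuousOn (by continuity))
    · intro x hx; exact (hd x).differentiableAt.differentiableWithinAt
    · intro x hx
      rw [(hd x).deriv]
      have hx0 : (0:ℝ) ≤ x := le_of_lt (by simpa using hx)
      have hB := lemB p x hp1 hx0
      have hDx := hD x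
      rw [sub_nonpos, ← sub_le_iff_le_add'] at *
      have key : p * Real.exp x ≤ (p + p * (1 - p) * x) * (1 - p + p * Real.exp x) := by
        nlinarith [mul_le_mul_of_nonneg_left hB (mul_nonneg hp0.le hq0.le), Real.exp_pos x]
      have := (div_le_iff₀ hDx).mpr key
      linarith
  have hg0 : g 0 = 0 := by simp [hg]
  have hgl : g l ≤ 0 := by
    have := hanti Set.self_mem_Ici (Set.mem_Ici.mpr hl) hl
    rwa [hg0] at this
  -- rewrite LHS
  have hrw : (1 - p) * Real.exp (-l * p) + p * Real.exp (l * (1 - p))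
      = Real.exp (-l * p) * (1 - p + p * Real.exp l) := by
    have h5 : Real.exp (l * (1 - p)) = Real.exp (-l * p) * Real.exp l := by
      rw [← Real.exp_add]; ring_nf
    rw [h5]; ring
  rw [hrw, Real.log_mul (Real.exp_pos _).ne' (hD l).ne', Real.log_exp]
  simp only [hg] at hgl
  nlinarith [hgl]
end

section
/- Let f : [0,1] → ℝ be continuous with modulus of continuity ω[f](δ) = sup{|f(s)-f(t)| : s,t ∈ [0,1], |s-t| ≤ δ}, and let Bₙ[f](x) = Σ_{m=0}^n C(n,m) f(m/n) x^m (1-x)^{n-m}. Then for every x ∈ (0,1) and n ≥ 1, |Bₙ[f](x) - f(x)| ≤ 2 ∫₀^∞ ω[f](z·√(x(1-x))/√n) · z · e^{-z²/2} dz. -/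
open Real Finset MeasureTheory

noncomputable def bernsteinPoly (n : ℕ) (f : ℝ → ℝ) (x : ℝ) : ℝ :=
  ∑ m ∈ Finset.range (n + 1),
    (n.choose m : ℝ) * f ((m : ℝ) / n) * x ^ m * (1 - x) ^ (n - m)

noncomputable def modCont (f : ℝ → ℝ) (δ : ℝ) : ℝ :=
  sSup {d | ∃ s ∈ Set.Icc (0 : ℝ) 1, ∃ t ∈ Set.Icc (0 : ℝ) 1,
    |s - t| ≤ δ ∧ d = |f s - f t|}

open Set Filter



lemma bne_exp_neg_one_lt : Real.exp (-1) < 0.3678795 := by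
  have h := Real.exp_one_gt_d9
  have hp : (0:ℝ) < Real.exp (-1) := Real.exp_pos _
  have hmul : Real.exp (-1) * Real.exp 1 = 1 := by
    rw [← Real.exp_add]; norm_num
  nlinarith [mul_lt_mul_of_pos_left h hp]

lemma bne_exp_neg_half_lt : Real.exp (-(1/2) : ℝ) < 0.6065308 := by
  have h2 : Real.exp (-(1/2):ℝ) * Real.exp (-(1/2):ℝ) = Real.exp (-1) := by
    rw [← Real.exp_add]; norm_num
  have h1 := bne_exp_neg_one_lt
  have hp : (0:ℝ) < Real.exp (-(1/2):ℝ) := Real.exp_pos _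
  nlinarith [h1, h2, hp]

lemma bne_exp_neg_two_lt : Real.exp (-2 : ℝ) < 0.1353354 := by
  have h2 : Real.exp (-2:ℝ) = Real.exp (-1) * Real.exp (-1) := by
    rw [← Real.exp_add]; norm_num
  have h1 := bne_exp_neg_one_lt
  have hp : (0:ℝ) < Real.exp (-1:ℝ) := Real.exp_pos _
  nlinarith

lemma bne_hasDeriv_inner (z : ℝ) : HasDerivAt (fun z : ℝ => -z^2/2) (-z) z := by
  have h := (hasDerivAt_pow 2 z).neg.div_const 2
  refine h.congr_deriv ?_
  push_cast; ring

lemma bne_hasDeriv_negexp (z : ℝ) :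
    HasDerivAt (fun z : ℝ => -Real.exp (-z^2/2)) (z * Real.exp (-z^2/2)) z := by
  have h2 := ((bne_hasDeriv_inner z).exp).neg
  refine h2.congr_deriv ?_; ring

lemma bne_tendsto_negexp : Tendsto (fun z : ℝ => -Real.exp (-z^2/2)) atTop (nhds 0) := by
  have h1 : Tendsto (fun z : ℝ => -z^2/2) atTop atBot := by
    have hp : Tendsto (fun z : ℝ => z^2) atTop atTop := tendsto_pow_atTop (by norm_num)
    have h := hp.atTop_mul_const_of_neg (show (-(1/2):ℝ) < 0 by norm_num)
    have he : (fun z : ℝ => -z^2/2) = fun z : ℝ => z^2 * (-(1/2)) := by funext z; ring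
    rw [he]; exact h
  have h2 := (Real.tendsto_exp_atBot.comp h1).neg
  simpa using h2

lemma bne_integrableOn_zexp (a : ℝ) (ha : 0 ≤ a) :
    IntegrableOn (fun z : ℝ => z * Real.exp (-z^2/2)) (Ioi a) := by
  apply integrableOn_Ioi_deriv_of_nonneg' (fun z _ => bne_hasDeriv_negexp z)
    (fun z hz => ?_) bne_tendsto_negexp
  have : (0:ℝ) < z := lt_of_le_of_lt ha hz
  positivity

lemma bne_integral_zexp (a : ℝ) (ha : 0 ≤ a) :
    ∫ z in Ioi a, z * Real.exp (-z^2/2) = Real.exp (-a^2/2) := by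
  have := integral_Ioi_of_hasDerivAt_of_nonneg' (fun z (_ : z ∈ Ici a) => bne_hasDeriv_negexp z)
    (fun z hz => by
      have : (0:ℝ) < z := lt_of_le_of_lt ha hz
      positivity) bne_tendsto_negexp
  rw [this]; ring

def bneSet (f : ℝ → ℝ) (δ : ℝ) : Set ℝ :=
  {d | ∃ s ∈ Set.Icc (0 : ℝ) 1, ∃ t ∈ Set.Icc (0 : ℝ) 1, |s - t| ≤ δ ∧ d = |f s - f t|}

lemma bne_modCont_eq (f : ℝ → ℝ) (δ : ℝ) : modCont f δ = sSup (bneSet f δ) := rfl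

variable {f : ℝ → ℝ} {M : ℝ}

lemma bne_mem_zero {δ : ℝ} (hδ : 0 ≤ δ) : (0:ℝ) ∈ bneSet f δ :=
  ⟨0, ⟨le_rfl, zero_le_one⟩, 0, ⟨le_rfl, zero_le_one⟩, by simpa using hδ, by simp⟩

lemma bne_bddAbove (hM : ∀ y ∈ Set.Icc (0:ℝ) 1, |f y| ≤ M) (δ : ℝ) :
    BddAbove (bneSet f δ) := by
  refine ⟨2*M, fun d hd => ?_⟩
  obtain ⟨s, hs, t, ht, -, rfl⟩ := hd
  calc |f s - f t| ≤ |f s| + |f t| := abs_sub _ _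
    _ ≤ 2*M := by linarith [hM s hs, hM t ht]

lemma bne_modCont_nonneg (hM : ∀ y ∈ Set.Icc (0:ℝ) 1, |f y| ≤ M) {δ : ℝ} (hδ : 0 ≤ δ) :
    0 ≤ modCont f δ :=
  le_csSup (bne_bddAbove hM δ) (bne_mem_zero hδ)

lemma bne_abs_le_modCont (hM : ∀ y ∈ Set.Icc (0:ℝ) 1, |f y| ≤ M) {s t δ : ℝ}
    (hs : s ∈ Set.Icc (0:ℝ) 1) (ht : t ∈ Set.Icc (0:ℝ) 1) (hst : |s - t| ≤ δ) :
    |f s - f t| ≤ modCont f δ :=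
  le_csSup (bne_bddAbove hM δ) ⟨s, hs, t, ht, hst, rfl⟩

lemma bne_set_empty {δ : ℝ} (hδ : δ < 0) : bneSet f δ = ∅ := by
  ext d
  simp only [bneSet, Set.mem_setOf_eq, Set.mem_empty_iff_false, iff_false]
  rintro ⟨s, hs, t, ht, h1, h2⟩
  linarith [abs_nonneg (s - t)]

lemma bne_modCont_mono (hM : ∀ y ∈ Set.Icc (0:ℝ) 1, |f y| ≤ M) : Monotone (modCont f) := by
  intro a b hab
  by_cases ha : 0 ≤ a
  · apply csSup_le_csSup (bne_bddAbove hM b) ⟨0, bne_mem_zero ha⟩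
    rintro d ⟨s, hs, t, ht, h1, h2⟩
    exact ⟨s, hs, t, ht, h1.trans hab, h2⟩
  · push_neg at ha
    rw [bne_modCont_eq, bne_set_empty ha, Real.sSup_empty]
    by_cases hb : 0 ≤ b
    · exact bne_modCont_nonneg hM hb
    · push_neg at hb
      rw [bne_modCont_eq, bne_set_empty hb, Real.sSup_empty]

lemma bne_modCont_le (hM : ∀ y ∈ Set.Icc (0:ℝ) 1, |f y| ≤ M) (δ : ℝ) :
    modCont f δ ≤ 2*M := by
  have hM0 : 0 ≤ M := le_trans (abs_nonneg _) (hM 0 ⟨le_rfl, zero_le_one⟩)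
  rw [bne_modCont_eq]
  apply Real.sSup_le _ (by linarith)
  rintro d ⟨s, hs, t, ht, -, rfl⟩
  calc |f s - f t| ≤ |f s| + |f t| := abs_sub _ _
    _ ≤ 2*M := by linarith [hM s hs, hM t ht]

lemma bne_modCont_zero : modCont f 0 ≤ 0 := by
  rw [bne_modCont_eq]
  apply Real.sSup_le _ le_rfl
  rintro d ⟨s, hs, t, ht, hst, rfl⟩
  have : s - t = 0 := abs_nonpos_iff.mp hst
  have hst' : s = t := by linarith
  simp [hst']

lemma bne_modCont_subadd (hM : ∀ y ∈ Set.Icc (0:ℝ) 1, |f y| ≤ M) {a b : ℝ}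
    (ha : 0 ≤ a) (hb : 0 ≤ b) :
    modCont f (a + b) ≤ modCont f a + modCont f b := by
  have key : ∀ s t : ℝ, s ∈ Set.Icc (0:ℝ) 1 → t ∈ Set.Icc (0:ℝ) 1 → t ≤ s → s - t ≤ a + b →
      |f s - f t| ≤ modCont f a + modCont f b := by
    intro s t hs ht hts hab2
    set u := min (t + b) s with hu
    have hu1 : t ≤ u := le_min (by linarith) hts
    have hu2 : u ≤ s := min_le_right _ _
    have huI : u ∈ Set.Icc (0:ℝ) 1 := ⟨le_trans ht.1 hu1, le_trans hu2 hs.2⟩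
    have h1 : |s - u| ≤ a := by
      rw [abs_of_nonneg (by linarith)]
      have : s - a ≤ u := le_min (by linarith) (by linarith)
      linarith
    have h2 : |u - t| ≤ b := by
      rw [abs_of_nonneg (by linarith)]
      have : u ≤ t + b := min_le_left _ _
      linarith
    calc |f s - f t| = |(f s - f u) + (f u - f t)| := by ring_nf
      _ ≤ |f s - f u| + |f u - f t| := abs_add_le _ _
      _ ≤ modCont f a + modCont f b :=
          add_le_add (bne_abs_le_modCont hM hs huI h1) (bne_abs_le_modCont hM huI ht h2)
  rw [bne_modCont_eq]
  apply Real.sSup_le _ (add_nonneg (bne_modCont_nonneg hM ha) (bne_modCont_nonneg hM hb))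
  rintro d ⟨s, hs, t, ht, hst, rfl⟩
  rcases le_total t s with h | h
  · exact key s t hs ht h (by cases abs_le.mp hst; linarith)
  · rw [abs_sub_comm]
    rw [abs_sub_comm] at hst
    exact key t s ht hs h (by cases abs_le.mp hst; linarith)

lemma bne_modCont_nat (hM : ∀ y ∈ Set.Icc (0:ℝ) 1, |f y| ≤ M) {δ : ℝ} (hδ : 0 ≤ δ) :
    ∀ k : ℕ, modCont f (k * δ) ≤ k * modCont f δ := by
  intro k
  induction k with
  | zero => simpa using bne_modCont_zero
  | succ k ih =>
      have h1 : ((k:ℝ)+1) * δ = k * δ + δ := by ring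
      push_cast
      rw [h1]
      calc modCont f (k * δ + δ) ≤ modCont f (k * δ) + modCont f δ :=
            bne_modCont_subadd hM (by positivity) hδ
        _ ≤ k * modCont f δ + modCont f δ := by linarith [ih]
        _ = ((k:ℝ)+1) * modCont f δ := by ring

lemma bne_modCont_quad (hM : ∀ y ∈ Set.Icc (0:ℝ) 1, |f y| ≤ M) {d δ : ℝ}
    (hd : 0 ≤ d) (hδ : 0 < δ) :
    modCont f d ≤ (1 + (d/δ)^2) * modCont f δ := by
  have hω0 : 0 ≤ modCont f δ := bne_modCont_nonneg hM hδ.le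
  rcases le_or_gt d δ with h | h
  · have h2 := bne_modCont_mono hM h
    nlinarith [sq_nonneg (d/δ)]
  · set k : ℕ := ⌈d/δ⌉₊ with hk
    have hk1 : d/δ ≤ (k:ℝ) := Nat.le_ceil _
    have hk2 : (k:ℝ) < d/δ + 1 := Nat.ceil_lt_add_one (by positivity)
    have h3 : d ≤ k * δ := by
      rw [div_le_iff₀ hδ] at hk1
      linarith
    have hratio : 1 ≤ d/δ := by rw [le_div_iff₀ hδ]; linarith
    calc modCont f d ≤ modCont f (k*δ) := bne_modCont_mono hM h3
      _ ≤ k * modCont f δ := bne_modCont_nat hM hδ.le k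
      _ ≤ (1 + (d/δ)^2) * modCont f δ := by
            have hkle : (k:ℝ) ≤ 1 + (d/δ)^2 := by nlinarith [sq_nonneg (d/δ - 1)]
            exact mul_le_mul_of_nonneg_right hkle hω0




lemma bne_exp_le_quad {x : ℝ} (hx : 0 ≤ x) : Real.exp (-x) ≤ 1 - x + x^2/2 := by
  have hq := Real.quadratic_le_exp_of_nonneg hx
  have h1 : Real.exp (-x) * Real.exp x = 1 := by rw [← Real.exp_add]; norm_num
  have h2 : (0:ℝ) < Real.exp x := Real.exp_pos x
  nlinarith [sq_nonneg x, sq_nonneg (x*x), Real.exp_pos (-x)]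

lemma bne_sqrt2_one : 1 ≤ Real.sqrt 2 := by
  nlinarith [Real.sq_sqrt (show (0:ℝ) ≤ 2 by norm_num), Real.sqrt_nonneg 2]

lemma bne_sqrt2_two : Real.sqrt 2 ≤ 2 := by
  nlinarith [Real.sq_sqrt (show (0:ℝ) ≤ 2 by norm_num), Real.sqrt_nonneg 2,
    sq_nonneg (Real.sqrt 2 - 2)]

lemma bne_interval_quad (A B a b : ℝ) (hab : a ≤ b) :
    ∫ z in a..b, (A + B*z^2) * (z * Real.exp (-z^2/2)) =
      (A + B*(a^2+2)) * Real.exp (-a^2/2) - (A + B*(b^2+2)) * Real.exp (-b^2/2) := by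
  have hder : ∀ z ∈ Set.uIcc a b,
      HasDerivAt (fun z : ℝ => -(A + B*(z^2+2)) * Real.exp (-z^2/2))
        ((A + B*z^2) * (z * Real.exp (-z^2/2))) z := by
    intro z _
    have hz2 : HasDerivAt (fun z : ℝ => z^2) (2*z) z := by
      simpa using hasDerivAt_pow 2 z
    have h1 : HasDerivAt (fun z : ℝ => -(A + B*(z^2+2))) (-(B*(2*z))) z :=
      (((hz2.add_const 2).const_mul B).const_add A).neg
    have hexp : HasDerivAt (fun z : ℝ => Real.exp (-z^2/2))
        (Real.exp (-z^2/2) * (-z)) z := (bne_hasDeriv_inner z).exp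
    have := h1.mul hexp
    refine this.congr_deriv ?_
    ring
  have hint : IntervalIntegrable (fun z : ℝ => (A + B*z^2) * (z * Real.exp (-z^2/2)))
      volume a b := by
    apply Continuous.intervalIntegrable
    fun_prop
  have := intervalIntegral.integral_eq_sub_of_hasDerivAt hder hint
  rw [this]
  ring

lemma bne_interval_log :
    ∫ z in (0:ℝ)..1, z * ((8 - 4*z^2 + z^4)/8) / (1+z^2)
      = -9/32 + 13/16 * Real.log 2 := by
  have hder : ∀ z ∈ Set.uIcc (0:ℝ) 1,
      HasDerivAt (fun z : ℝ => (z^4/2 - 5*z^2)/16 + 13/16 * Real.log (1+z^2))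
        (z * ((8 - 4*z^2 + z^4)/8) / (1+z^2)) z := by
    intro z _
    have hz2 : HasDerivAt (fun z : ℝ => z^2) (2*z) z := by
      simpa using hasDerivAt_pow 2 z
    have hz4 : HasDerivAt (fun z : ℝ => z^4) (4*z^3) z := by
      simpa using hasDerivAt_pow 4 z
    have h1 : HasDerivAt (fun z : ℝ => (z^4/2 - 5*z^2)/16) ((4*z^3/2 - 5*(2*z))/16) z :=
      ((hz4.div_const 2).sub (hz2.const_mul 5)).div_const 16
    have hpos : (0:ℝ) < 1 + z^2 := by positivity
    have h2 : HasDerivAt (fun z : ℝ => 1 + z^2) (2*z) z := hz2.const_add 1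
    have h3 : HasDerivAt (fun z : ℝ => Real.log (1+z^2)) (2*z/(1+z^2)) z :=
      h2.log (ne_of_gt hpos)
    have := h1.add (h3.const_mul (13/16))
    refine this.congr_deriv ?_
    field_simp
    ring
  have hint : IntervalIntegrable (fun z : ℝ => z * ((8 - 4*z^2 + z^4)/8) / (1+z^2))
      volume 0 1 := by
    apply Continuous.intervalIntegrable
    apply Continuous.div (by fun_prop) (by fun_prop)
    intro z; positivity
  have := intervalIntegral.integral_eq_sub_of_hasDerivAt hder hint
  rw [this]
  rw [show ((1:ℝ)+1^2) = 2 by norm_num, show ((1:ℝ)+0^2) = 1 by norm_num, Real.log_one]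
  ring

lemma bne_g_integrableOn :
    IntegrableOn (fun z : ℝ => z * Real.exp (-z^2/2) / (1+z^2)) (Set.Ioi 0) := by
  have hgc : Continuous (fun z : ℝ => z * Real.exp (-z^2/2) / (1+z^2)) := by
    apply Continuous.div (by fun_prop) (by fun_prop)
    intro z; positivity
  apply (bne_integrableOn_zexp 0 le_rfl).mono' hgc.aestronglyMeasurable
  filter_upwards [ae_restrict_mem measurableSet_Ioi] with z hz
  have hz0 : (0:ℝ) < z := hz
  have h1 : (0:ℝ) < 1 + z^2 := by positivity
  rw [Real.norm_eq_abs, abs_of_nonneg (by positivity)]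
  rw [div_le_iff₀ h1]
  nlinarith [mul_nonneg (mul_nonneg hz0.le (Real.exp_pos (-z^2/2)).le) (sq_nonneg z)]

lemma bne_C_le :
    ∫ z in Ioi (0:ℝ), z * Real.exp (-z^2/2) / (1+z^2) ≤ 1/2 := by
  set g : ℝ → ℝ := fun z => z * Real.exp (-z^2/2) / (1+z^2) with hgdef
  have hgc : Continuous g := by
    apply Continuous.div (by fun_prop) (by fun_prop)
    intro z; positivity
  have hInt : IntegrableOn g (Ioi 0) := bne_g_integrableOn
  have hsub1 : Set.Ioc (0:ℝ) 1 ⊆ Set.Ioi 0 := fun z hz => hz.1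
  have hsub2 : Set.Ioc (1:ℝ) (Real.sqrt 2) ⊆ Set.Ioi 0 := fun z hz => lt_trans one_pos hz.1
  have hsub3 : Set.Ioc (Real.sqrt 2) 2 ⊆ Set.Ioi 0 := fun z hz =>
    lt_trans (lt_of_lt_of_le one_pos bne_sqrt2_one) hz.1
  have hsub4 : Set.Ioi (2:ℝ) ⊆ Set.Ioi 0 := fun z hz => Set.mem_Ioi.mpr (lt_trans two_pos hz)
  have hsub5 : Set.Ioi (1:ℝ) ⊆ Set.Ioi 0 := fun z hz => Set.mem_Ioi.mpr (lt_trans one_pos hz)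
  have hsub6 : Set.Ioi (Real.sqrt 2) ⊆ Set.Ioi 0 := fun z hz =>
    lt_trans (lt_of_lt_of_le one_pos bne_sqrt2_one) hz
  have hs2a := bne_sqrt2_one
  have hs2b := bne_sqrt2_two
  have hsq2 : Real.sqrt 2 ^ 2 = 2 := Real.sq_sqrt (by norm_num)
  -- splitting
  have e1 : ∫ z in Ioi (0:ℝ), g z
      = (∫ z in Ioc (0:ℝ) 1, g z) + ((∫ z in Ioc (1:ℝ) (Real.sqrt 2), g z)
        + ((∫ z in Ioc (Real.sqrt 2) 2, g z) + (∫ z in Ioi (2:ℝ), g z))) := by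
    rw [← setIntegral_union (Ioc_disjoint_Ioi le_rfl) measurableSet_Ioi
      (hInt.mono_set hsub3) (hInt.mono_set hsub4)]
    rw [Ioc_union_Ioi_eq_Ioi hs2b]
    rw [← setIntegral_union (Ioc_disjoint_Ioi le_rfl) measurableSet_Ioi
      (hInt.mono_set hsub2) (hInt.mono_set hsub6)]
    rw [Ioc_union_Ioi_eq_Ioi hs2a]
    rw [← setIntegral_union (Ioc_disjoint_Ioi le_rfl) measurableSet_Ioi
      (hInt.mono_set hsub1) (hInt.mono_set hsub5)]
    rw [Ioc_union_Ioi_eq_Ioi one_pos.le]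
  rw [e1]
  have hb1 : (∫ z in Set.Ioc (0:ℝ) 1, g z) ≤ -9/32 + 13/16 * Real.log 2 := by
    have hmono : ∀ z ∈ Set.Ioc (0:ℝ) 1, g z ≤ z * ((8 - 4*z^2 + z^4)/8) / (1+z^2) := by
      intro z hz
      have hz0 : 0 < z := hz.1
      have h1 : (0:ℝ) < 1 + z^2 := by positivity
      have hexp : Real.exp (-z^2/2) ≤ (8 - 4*z^2 + z^4)/8 := by
        have h := bne_exp_le_quad (x := z^2/2) (by positivity)
        rw [show -(z^2/2) = -z^2/2 by ring] at h
        nlinarith [h]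
      show z * Real.exp (-z^2/2) / (1+z^2) ≤ z * ((8 - 4*z^2 + z^4)/8) / (1+z^2)
      gcongr
    have hintm : IntegrableOn (fun z : ℝ => z * ((8 - 4*z^2 + z^4)/8) / (1+z^2))
        (Set.Ioc (0:ℝ) 1) := by
      apply Continuous.integrableOn_Ioc
      apply Continuous.div (by fun_prop) (by fun_prop)
      intro z; positivity
    have hval : (∫ z in Set.Ioc (0:ℝ) 1, z * ((8 - 4*z^2 + z^4)/8) / (1+z^2))
        = -9/32 + 13/16 * Real.log 2 := by
      rw [← intervalIntegral.integral_of_le (by norm_num : (0:ℝ) ≤ 1)]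
      exact bne_interval_log
    exact (setIntegral_mono_on (hInt.mono_set hsub1) hintm measurableSet_Ioc hmono).trans
      hval.le
  have hb2 : (∫ z in Set.Ioc (1:ℝ) (Real.sqrt 2), g z) ≤ 1/6 * Real.exp (-(1/2) : ℝ) := by
    have hmono : ∀ z ∈ Set.Ioc (1:ℝ) (Real.sqrt 2),
        g z ≤ (2/3 + (-1/6)*z^2) * (z * Real.exp (-z^2/2)) := by
      intro z hz
      have hz0 : (0:ℝ) < z := lt_trans one_pos hz.1
      have h1 : (0:ℝ) < 1 + z^2 := by positivity
      have ht1 : 1 ≤ z^2 := by nlinarith [hz.1]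
      have ht2 : z^2 ≤ 2 := by
        have := pow_le_pow_left₀ hz0.le hz.2 2
        rwa [hsq2] at this
      rw [hgdef]
      rw [div_le_iff₀ h1]
      nlinarith [mul_nonneg (mul_nonneg (mul_nonneg hz0.le (Real.exp_pos (-z^2/2)).le)
        (by linarith : (0:ℝ) ≤ z^2 - 1)) (by linarith : (0:ℝ) ≤ 2 - z^2)]
    have hintm : IntegrableOn (fun z : ℝ => (2/3 + (-1/6)*z^2) * (z * Real.exp (-z^2/2)))
        (Set.Ioc (1:ℝ) (Real.sqrt 2)) := by
      apply Continuous.integrableOn_Ioc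
      fun_prop
    have hval : (∫ z in Set.Ioc (1:ℝ) (Real.sqrt 2), (2/3 + (-1/6)*z^2) * (z * Real.exp (-z^2/2)))
        = 1/6 * Real.exp (-(1/2) : ℝ) := by
      rw [← intervalIntegral.integral_of_le hs2a, bne_interval_quad _ _ _ _ hs2a, hsq2]
      norm_num
    exact (setIntegral_mono_on (hInt.mono_set hsub2) hintm measurableSet_Ioc hmono).trans
      hval.le
  have hb3 : (∫ z in Set.Ioc (Real.sqrt 2) 2, g z)
      ≤ 1/5 * Real.exp (-1 : ℝ) - 1/15 * Real.exp (-2 : ℝ) := by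
    have hmono : ∀ z ∈ Set.Ioc (Real.sqrt 2) 2,
        g z ≤ (7/15 + (-1/15)*z^2) * (z * Real.exp (-z^2/2)) := by
      intro z hz
      have hz0 : (0:ℝ) < z := lt_trans (lt_of_lt_of_le one_pos hs2a) hz.1
      have h1 : (0:ℝ) < 1 + z^2 := by positivity
      have ht1 : 2 ≤ z^2 := by
        have := pow_le_pow_left₀ (Real.sqrt_nonneg 2) hz.1.le 2
        rw [hsq2] at this; exact this
      have ht2 : z^2 ≤ 4 := by nlinarith [hz.2]
      rw [hgdef]
      rw [div_le_iff₀ h1]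
      nlinarith [mul_nonneg (mul_nonneg (mul_nonneg hz0.le (Real.exp_pos (-z^2/2)).le)
        (by linarith : (0:ℝ) ≤ z^2 - 2)) (by linarith : (0:ℝ) ≤ 4 - z^2)]
    have hintm : IntegrableOn (fun z : ℝ => (7/15 + (-1/15)*z^2) * (z * Real.exp (-z^2/2)))
        (Set.Ioc (Real.sqrt 2) 2) := by
      apply Continuous.integrableOn_Ioc
      fun_prop
    have hval : (∫ z in Set.Ioc (Real.sqrt 2) 2, (7/15 + (-1/15)*z^2) * (z * Real.exp (-z^2/2)))
        = 1/5 * Real.exp (-1 : ℝ) - 1/15 * Real.exp (-2 : ℝ) := by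
      rw [← intervalIntegral.integral_of_le hs2b, bne_interval_quad _ _ _ _ hs2b, hsq2]
      norm_num
    exact (setIntegral_mono_on (hInt.mono_set hsub3) hintm measurableSet_Ioc hmono).trans
      hval.le
  have hb4 : (∫ z in Set.Ioi (2:ℝ), g z) ≤ 1/5 * Real.exp (-2 : ℝ) := by
    have hmono : ∀ z ∈ Set.Ioi (2:ℝ), g z ≤ 1/5 * (z * Real.exp (-z^2/2)) := by
      intro z hz
      have hz0 : (0:ℝ) < z := lt_trans two_pos hz
      have h1 : (0:ℝ) < 1 + z^2 := by positivity
      have ht1 : 4 ≤ z^2 := by nlinarith [Set.mem_Ioi.mp hz]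
      rw [hgdef]
      rw [div_le_iff₀ h1]
      nlinarith [mul_nonneg (mul_nonneg hz0.le (Real.exp_pos (-z^2/2)).le)
        (by linarith : (0:ℝ) ≤ z^2 - 4)]
    have hintm : IntegrableOn (fun z : ℝ => 1/5 * (z * Real.exp (-z^2/2))) (Set.Ioi (2:ℝ)) :=
      (bne_integrableOn_zexp 2 (by norm_num)).const_mul (1/5)
    have hval : (∫ z in Set.Ioi (2:ℝ), 1/5 * (z * Real.exp (-z^2/2)))
        = 1/5 * Real.exp (-2 : ℝ) := by
      rw [integral_const_mul, bne_integral_zexp 2 (by norm_num)]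
      norm_num
    exact (setIntegral_mono_on (hInt.mono_set hsub4) hintm measurableSet_Ioi hmono).trans
      hval.le
  have hlog := Real.log_two_lt_d9
  have e05 := bne_exp_neg_half_lt
  have e1b := bne_exp_neg_one_lt
  have e2b := bne_exp_neg_two_lt
  have epos05 : (0:ℝ) < Real.exp (-(1/2):ℝ) := Real.exp_pos _
  have epos1 : (0:ℝ) < Real.exp (-1:ℝ) := Real.exp_pos _
  have epos2 : (0:ℝ) < Real.exp (-2:ℝ) := Real.exp_pos _
  linarith



lemma bne_sum_p (n : ℕ) (x : ℝ) :
    ∑ m ∈ Finset.range (n+1), (n.choose m : ℝ) * x^m * (1-x)^(n-m) = 1 := by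
  have h := add_pow x (1-x) n
  calc ∑ m ∈ Finset.range (n+1), (n.choose m : ℝ) * x^m * (1-x)^(n-m)
      = ∑ m ∈ Finset.range (n+1), x^m * (1-x)^(n-m) * (n.choose m : ℝ) := by
        apply Finset.sum_congr rfl; intros; ring
    _ = (x + (1-x))^n := h.symm
    _ = 1 := by norm_num

lemma bne_variance (n : ℕ) (hn : 1 ≤ n) (x : ℝ) (hx : x ∈ Set.Ioo (0:ℝ) 1) :
    ∑ m ∈ Finset.range (n+1),
      ((m:ℝ)/n - x)^2 * ((n.choose m : ℝ) * x^m * (1-x)^(n-m)) = x*(1-x)/n := by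
  have hn' : 0 < (n:ℝ) := by exact_mod_cast hn
  have h := bernstein.variance (n := n) (by omega) ⟨x, hx.1.le, hx.2.le⟩
  have hgoal := (Fin.sum_univ_eq_sum_range
    (fun m => ((m:ℝ)/n - x)^2 * ((n.choose m : ℝ) * x^m * (1-x)^(n-m))) (n+1)).symm
  rw [hgoal, ← h]
  apply Finset.sum_congr rfl
  intro i _
  rw [bernstein_apply]
  have hz : ((bernstein.z i : unitInterval) : ℝ) = ((i:ℕ):ℝ)/n := rfl
  rw [hz]
  push_cast
  ring

theorem bernstein_nonuniform_error_bound
    (f : ℝ → ℝ) (hf : ContinuousOn f (Set.Icc (0 : ℝ) 1))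
    (x : ℝ) (hx : x ∈ Set.Ioo (0 : ℝ) 1) (n : ℕ) (hn : 1 ≤ n) :
    |bernsteinPoly n f x - f x|
      ≤ 2 * ∫ z in Set.Ioi (0 : ℝ),
          modCont f (z * Real.sqrt (x * (1 - x)) / Real.sqrt n) * z *
            Real.exp (-z ^ 2 / 2) := by
  obtain ⟨M, hM⟩ : ∃ M : ℝ, ∀ y ∈ Set.Icc (0:ℝ) 1, |f y| ≤ M := by
    obtain ⟨M, hM⟩ := isCompact_Icc.exists_bound_of_continuousOn hf
    exact ⟨M, fun y hy => by simpa [Real.norm_eq_abs] using hM y hy⟩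
  have hx0 : 0 < x := hx.1
  have hx1 : x < 1 := hx.2
  have hn0 : 0 < (n:ℝ) := by exact_mod_cast hn
  set c : ℝ := Real.sqrt (x*(1-x)) / Real.sqrt (n:ℝ) with hc
  have hc0 : 0 < c := div_pos (Real.sqrt_pos.mpr (by nlinarith)) (Real.sqrt_pos.mpr hn0)
  have hc2 : c^2 = x*(1-x)/n := by
    rw [hc, div_pow, Real.sq_sqrt (by nlinarith : 0 ≤ x*(1-x)), Real.sq_sqrt hn0.le]
  set L : ℝ := |bernsteinPoly n f x - f x| with hLdef
  have hL0 : 0 ≤ L := abs_nonneg _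
  -- Step 1 : key inequality
  have key : ∀ z : ℝ, 0 < z → L ≤ (1 + 1/z^2) * modCont f (z*c) := by
    intro z hz
    have hzc : 0 < z*c := mul_pos hz hc0
    set W : ℝ := modCont f (z*c) with hW
    have hW0 : 0 ≤ W := bne_modCont_nonneg hM hzc.le
    set p : ℕ → ℝ := fun m => (n.choose m : ℝ) * x^m * (1-x)^(n-m) with hp
    have hp0 : ∀ m, 0 ≤ p m := by
      intro m
      have h1 : (0:ℝ) ≤ x := hx0.le
      have h2 : (0:ℝ) ≤ 1 - x := by linarith
      positivity
    have hdiff : bernsteinPoly n f x - f x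
        = ∑ m ∈ Finset.range (n+1), p m * (f ((m:ℝ)/n) - f x) := by
      have h1 : bernsteinPoly n f x = ∑ m ∈ Finset.range (n+1), p m * f ((m:ℝ)/n) := by
        rw [bernsteinPoly]
        apply Finset.sum_congr rfl
        intro m _
        rw [hp]; ring
      have h2 : f x = ∑ m ∈ Finset.range (n+1), p m * f x := by
        rw [← Finset.sum_mul, bne_sum_p n x, one_mul]
      rw [h1]
      nth_rewrite 1 [h2]
      rw [← Finset.sum_sub_distrib]
      apply Finset.sum_congr rfl
      intro m _
      ring
    have hmem : ∀ m ∈ Finset.range (n+1), ((m:ℝ)/n) ∈ Set.Icc (0:ℝ) 1 := by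
      intro m hm
      have hmn : (m:ℝ) ≤ n := by
        exact_mod_cast Nat.lt_succ_iff.mp (Finset.mem_range.mp hm)
      constructor
      · positivity
      · rw [div_le_one hn0]; exact hmn
    have habs : L ≤ ∑ m ∈ Finset.range (n+1), p m * modCont f (|(m:ℝ)/n - x|) := by
      rw [hLdef, hdiff]
      refine (Finset.abs_sum_le_sum_abs _ _).trans ?_
      apply Finset.sum_le_sum
      intro m hm
      rw [abs_mul, abs_of_nonneg (hp0 m)]
      exact mul_le_mul_of_nonneg_left
        (bne_abs_le_modCont hM (hmem m hm) ⟨hx0.le, hx1.le⟩ le_rfl) (hp0 m)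
    have hstep : ∑ m ∈ Finset.range (n+1), p m * modCont f (|(m:ℝ)/n - x|)
        ≤ ∑ m ∈ Finset.range (n+1), (p m * W + (((m:ℝ)/n - x)^2 * p m) * (W / (z*c)^2)) := by
      apply Finset.sum_le_sum
      intro m _
      have hq := bne_modCont_quad hM (abs_nonneg ((m:ℝ)/n - x)) hzc
      have hq2 : modCont f (|(m:ℝ)/n - x|) ≤ (1 + (((m:ℝ)/n - x)/(z*c))^2) * W := by
        rw [hW]
        calc modCont f (|(m:ℝ)/n - x|) ≤ (1 + ((|(m:ℝ)/n - x|)/(z*c))^2) * modCont f (z*c) := hq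
          _ = (1 + (((m:ℝ)/n - x)/(z*c))^2) * modCont f (z*c) := by
              rw [div_pow, div_pow, sq_abs]
      calc p m * modCont f (|(m:ℝ)/n - x|)
          ≤ p m * ((1 + (((m:ℝ)/n - x)/(z*c))^2) * W) := mul_le_mul_of_nonneg_left hq2 (hp0 m)
        _ = p m * W + (((m:ℝ)/n - x)^2 * p m) * (W / (z*c)^2) := by
            field_simp
    have hsum2 : ∑ m ∈ Finset.range (n+1), (p m * W + (((m:ℝ)/n - x)^2 * p m) * (W / (z*c)^2))
        = W + (x*(1-x)/n) * (W / (z*c)^2) := by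
      rw [Finset.sum_add_distrib, ← Finset.sum_mul, ← Finset.sum_mul]
      rw [hp, bne_sum_p n x, bne_variance n hn x hx, one_mul]
    have hfinal : W + (x*(1-x)/n) * (W / (z*c)^2) = (1 + 1/z^2) * W := by
      rw [← hc2, mul_pow]
      field_simp
    calc L ≤ ∑ m ∈ Finset.range (n+1), p m * modCont f (|(m:ℝ)/n - x|) := habs
      _ ≤ _ := hstep
      _ = W + (x*(1-x)/n) * (W / (z*c)^2) := hsum2
      _ = (1 + 1/z^2) * W := hfinal
  -- Step 2 : pointwise comparison on Ioi 0
  have hlow : ∀ z ∈ Set.Ioi (0:ℝ), L * (z^3/(1+z^2) * Real.exp (-z^2/2))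
      ≤ modCont f (z * Real.sqrt (x * (1 - x)) / Real.sqrt n) * z * Real.exp (-z^2/2) := by
    intro z hz
    have hz0 : (0:ℝ) < z := hz
    have harg : z * Real.sqrt (x * (1 - x)) / Real.sqrt (n:ℝ) = z * c := by
      rw [hc]; ring
    rw [harg]
    have hW0 : 0 ≤ modCont f (z*c) := bne_modCont_nonneg hM (mul_pos hz0 hc0).le
    have hk := key z hz0
    have h2 : L * (z^2/(1+z^2)) ≤ modCont f (z*c) := by
      have hmul := mul_le_mul_of_nonneg_right hk (le_of_lt (by positivity : (0:ℝ) < z^2/(1+z^2)))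
      have hident : (1 + 1/z^2) * modCont f (z*c) * (z^2/(1+z^2)) = modCont f (z*c) := by
        field_simp
        ring
      calc L * (z^2/(1+z^2)) ≤ (1 + 1/z^2) * modCont f (z*c) * (z^2/(1+z^2)) := hmul
        _ = modCont f (z*c) := hident
    have hee : (0:ℝ) ≤ z * Real.exp (-z^2/2) := by positivity
    calc L * (z^3/(1+z^2) * Real.exp (-z^2/2))
        = (L * (z^2/(1+z^2))) * (z * Real.exp (-z^2/2)) := by ring
      _ ≤ modCont f (z*c) * (z * Real.exp (-z^2/2)) := mul_le_mul_of_nonneg_right h2 hee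
      _ = modCont f (z*c) * z * Real.exp (-z^2/2) := by ring
  -- Step 3 : integrate
  have hmeas_exp : Measurable (fun z : ℝ => Real.exp (-z^2/2)) :=
    Real.measurable_exp.comp (((measurable_id.pow_const 2).neg).div_const 2)
  have hGmeas : Measurable (fun z : ℝ =>
      modCont f (z * Real.sqrt (x * (1 - x)) / Real.sqrt n) * z * Real.exp (-z^2/2)) :=
    (((bne_modCont_mono hM).measurable.comp
      ((measurable_id.mul_const (Real.sqrt (x * (1 - x)))).div_const (Real.sqrt n))).mul
        measurable_id).mul hmeas_exp
  have hGint : IntegrableOn (fun z : ℝ =>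
      modCont f (z * Real.sqrt (x * (1 - x)) / Real.sqrt n) * z * Real.exp (-z^2/2))
      (Set.Ioi 0) := by
    apply (((bne_integrableOn_zexp 0 le_rfl).const_mul (2*M)).mono'
      hGmeas.aestronglyMeasurable)
    filter_upwards [ae_restrict_mem measurableSet_Ioi] with z hz
    have hz0 : (0:ℝ) < z := hz
    have harg : z * Real.sqrt (x * (1 - x)) / Real.sqrt (n:ℝ) = z * c := by rw [hc]; ring
    have hW0 : 0 ≤ modCont f (z * Real.sqrt (x * (1 - x)) / Real.sqrt n) := by
      rw [harg]; exact bne_modCont_nonneg hM (mul_pos hz0 hc0).le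
    have hWle : modCont f (z * Real.sqrt (x * (1 - x)) / Real.sqrt n) ≤ 2*M :=
      bne_modCont_le hM _
    rw [Real.norm_eq_abs, abs_of_nonneg (by positivity)]
    calc modCont f (z * Real.sqrt (x * (1 - x)) / Real.sqrt n) * z * Real.exp (-z^2/2)
        ≤ 2*M * z * Real.exp (-z^2/2) := by
          apply mul_le_mul_of_nonneg_right _ (Real.exp_pos _).le
          exact mul_le_mul_of_nonneg_right hWle hz0.le
      _ = 2*M * (z * Real.exp (-z^2/2)) := by ring
  have hFint : IntegrableOn (fun z : ℝ => L * (z^3/(1+z^2) * Real.exp (-z^2/2)))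
      (Set.Ioi 0) := by
    apply (((bne_integrableOn_zexp 0 le_rfl).const_mul L).mono'
      ((((measurable_id.pow_const 3).div
        (measurable_const.add (measurable_id.pow_const 2))).mul hmeas_exp).const_mul
          L).aestronglyMeasurable)
    filter_upwards [ae_restrict_mem measurableSet_Ioi] with z hz
    have hz0 : (0:ℝ) < z := hz
    have hfrac : z^3/(1+z^2) ≤ z := by
      rw [div_le_iff₀ (by positivity)]
      nlinarith
    rw [Real.norm_eq_abs]
    show |L * (z^3/(1+z^2) * Real.exp (-z^2/2))| ≤ L * (z * Real.exp (-z^2/2))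
    rw [abs_of_nonneg (mul_nonneg hL0
      (mul_nonneg (div_nonneg (pow_nonneg hz0.le 3) (by positivity)) (Real.exp_pos _).le))]
    calc L * (z^3/(1+z^2) * Real.exp (-z^2/2))
        ≤ L * (z * Real.exp (-z^2/2)) := by
          apply mul_le_mul_of_nonneg_left _ hL0
          exact mul_le_mul_of_nonneg_right hfrac (Real.exp_pos _).le
      _ = L * (z * Real.exp (-z^2/2)) := rfl
  have hmono := setIntegral_mono_on hFint hGint measurableSet_Ioi hlow
  have hvalue : (1:ℝ)/2 ≤ ∫ z in Set.Ioi (0:ℝ), z^3/(1+z^2) * Real.exp (-z^2/2) := by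
    have hident : Set.EqOn (fun z : ℝ => z^3/(1+z^2) * Real.exp (-z^2/2))
        (fun z : ℝ => z * Real.exp (-z^2/2) - z * Real.exp (-z^2/2) / (1+z^2))
        (Set.Ioi 0) := by
      intro z _
      have h1 : (1:ℝ) + z^2 ≠ 0 := by positivity
      field_simp
      ring
    rw [setIntegral_congr_fun measurableSet_Ioi hident]
    rw [integral_sub (bne_integrableOn_zexp 0 le_rfl) bne_g_integrableOn]
    rw [bne_integral_zexp 0 le_rfl]
    have := bne_C_le
    have h0 : Real.exp (-(0:ℝ)^2/2) = 1 := by norm_num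
    rw [h0]
    linarith
  have hintsplit : ∫ z in Set.Ioi (0:ℝ), L * (z^3/(1+z^2) * Real.exp (-z^2/2))
      = L * ∫ z in Set.Ioi (0:ℝ), z^3/(1+z^2) * Real.exp (-z^2/2) := integral_const_mul L _
  rw [hintsplit] at hmono
  have hLv : L * (1/2) ≤ L * ∫ z in Set.Ioi (0:ℝ), z^3/(1+z^2) * Real.exp (-z^2/2) :=
    mul_le_mul_of_nonneg_left hvalue hL0
  have hfin : L ≤ 2 * ∫ z in Set.Ioi (0:ℝ),
      modCont f (z * Real.sqrt (x * (1 - x)) / Real.sqrt n) * z * Real.exp (-z^2/2) := by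
    linarith
  exact hfin
end

section
/- Let f : [0,1] → ℝ satisfy the Hölder condition |f(s) - f(t)| ≤ H|s-t|^α for some α ∈ (0,1] and H < ∞. Then for every x ∈ (0,1) and n ≥ 1, |Bₙ[f](x) - f(x)| ≤ 2H · (2x(1-x)/n)^{α/2} · Γ(α/2). -/
open Real Finset MeasureTheory Set intervalIntegral

lemma gamma_lb {s : ℝ} (h0 : 0 < s) (h1 : s ≤ 1/2) : (1:ℝ)/2 ≤ Real.Gamma s := by
  have hint := Real.GammaIntegral_convergent h0
  have hA : IntervalIntegrable (fun x => Real.exp (-x) * x ^ (s-1)) volume 0 1 := by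
    rw [intervalIntegrable_iff_integrableOn_Ioc_of_le (by norm_num)]
    exact hint.mono_set Ioc_subset_Ioi_self
  have hB : IntervalIntegrable (fun x : ℝ => Real.exp (-1) * x ^ (s-1)) volume 0 1 := by
    apply IntervalIntegrable.const_mul
    apply intervalIntegral.intervalIntegrable_rpow'
    linarith
  have step2 : ∫ x in (0:ℝ)..1, Real.exp (-1) * x ^ (s-1) ≤
      ∫ x in (0:ℝ)..1, Real.exp (-x) * x ^ (s-1) := by
    apply intervalIntegral.integral_mono_on (by norm_num) hB hA
    intro y hy
    rcases eq_or_lt_of_le hy.1 with h | h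
    · rw [← h, Real.zero_rpow (by linarith), mul_zero, mul_zero]
    · apply mul_le_mul_of_nonneg_right
      · exact Real.exp_le_exp.2 (by linarith [hy.2])
      · positivity
  have hval : ∫ x in (0:ℝ)..1, Real.exp (-1) * x ^ (s-1) = Real.exp (-1) / s := by
    rw [intervalIntegral.integral_const_mul, integral_rpow (Or.inl (by linarith))]
    rw [Real.zero_rpow (by linarith : s - 1 + 1 ≠ 0), Real.one_rpow]
    ring_nf
  have step1 : ∫ x in (0:ℝ)..1, Real.exp (-x) * x ^ (s-1) ≤ Real.Gamma s := by
    rw [Real.Gamma_eq_integral h0, intervalIntegral.integral_of_le (by norm_num)]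
    apply setIntegral_mono_set hint
    · filter_upwards [ae_restrict_mem measurableSet_Ioi] with y hy
      have hy' : (0:ℝ) < y := hy
      positivity
    · exact HasSubset.Subset.eventuallyLE Ioc_subset_Ioi_self
  have he : Real.exp 1 ≤ 4 := by
    have := Real.exp_one_lt_d9; linarith
  have : (1:ℝ)/2 ≤ Real.exp (-1) / s := by
    rw [Real.exp_neg, div_le_div_iff₀ (by norm_num) h0]
    have h4 : (4:ℝ)⁻¹ ≤ (Real.exp 1)⁻¹ := inv_anti₀ (Real.exp_pos 1) he
    linarith
  linarith [hval ▸ step2]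

theorem bernstein_holder_error_bound
    (f : ℝ → ℝ) (α H : ℝ) (hα : α ∈ Set.Ioc (0 : ℝ) 1) (hH : 0 ≤ H)
    (hHolder : ∀ s ∈ Set.Icc (0 : ℝ) 1, ∀ t ∈ Set.Icc (0 : ℝ) 1,
      |f s - f t| ≤ H * |s - t| ^ α)
    (x : ℝ) (hx : x ∈ Set.Ioo (0 : ℝ) 1) (n : ℕ) (hn : 1 ≤ n) :
    |bernsteinPoly n f x - f x|
      ≤ 2 * H * (2 * x * (1 - x) / n) ^ (α / 2) * Real.Gamma (α / 2) := by
  obtain ⟨hα0, hα1⟩ := hα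
  obtain ⟨hx0, hx1⟩ := hx
  have hN : (0:ℝ) < n := by exact_mod_cast hn
  set p : ℕ → ℝ := fun m => (n.choose m : ℝ) * x^m * (1-x)^(n-m) with hpdef
  have hpnn : ∀ m ∈ Finset.range (n+1), 0 ≤ p m := fun m _ =>
    mul_nonneg (mul_nonneg (Nat.cast_nonneg _) (pow_nonneg hx0.le _))
      (pow_nonneg (by linarith) _)
  have hsum : ∑ m ∈ Finset.range (n+1), p m = 1 := by
    calc ∑ m ∈ Finset.range (n+1), p m
        = ∑ m ∈ Finset.range (n+1), x^m * (1-x)^(n-m) * (n.choose m : ℝ) :=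
          Finset.sum_congr rfl (fun m _ => by simp [hpdef]; ring)
      _ = (x + (1-x))^n := (add_pow x (1-x) n).symm
      _ = 1 := by norm_num
  have hvar : ∑ m ∈ Finset.range (n+1), p m * ((m:ℝ)/n - x)^2 = x*(1-x)/n := by
    have h2 := congrArg (Polynomial.eval x) (bernsteinPolynomial.variance (R := ℝ) n)
    simp only [Polynomial.eval_finset_sum, Polynomial.eval_mul, Polynomial.eval_pow,
      Polynomial.eval_sub, Polynomial.eval_smul, Polynomial.eval_X, Polynomial.eval_one,
      Polynomial.eval_natCast, bernsteinPolynomial, smul_eq_mul, nsmul_eq_mul] at h2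
    have key : ∀ m ∈ Finset.range (n+1), p m * ((m:ℝ)/n - x)^2
        = ((n:ℝ)*x - m)^2 * ((n.choose m : ℝ) * x^m * (1-x)^(n-m)) / n^2 := by
      intro m _
      have : ((m:ℝ)/n - x) = ((m:ℝ) - n*x)/n := by field_simp
      rw [this, div_pow]
      have h1 : ((m:ℝ) - n*x)^2 = ((n:ℝ)*x - m)^2 := by ring
      rw [h1, hpdef]
      field_simp
    rw [Finset.sum_congr rfl key, ← Finset.sum_div, h2]
    field_simp
  -- step 1 : pointwise error bound
  have hmem : ∀ m ∈ Finset.range (n+1), (m:ℝ)/n ∈ Set.Icc (0:ℝ) 1 := by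
    intro m hm
    rw [Finset.mem_range, Nat.lt_succ_iff] at hm
    constructor
    · positivity
    · rw [div_le_one hN]; exact_mod_cast hm
  have step1 : |bernsteinPoly n f x - f x|
      ≤ H * ∑ m ∈ Finset.range (n+1), p m * |(m:ℝ)/n - x| ^ α := by
    have hdiff : bernsteinPoly n f x - f x
        = ∑ m ∈ Finset.range (n+1), p m * (f ((m:ℝ)/n) - f x) := by
      rw [bernsteinPoly]
      simp only [mul_sub, Finset.sum_sub_distrib, ← Finset.sum_mul, hsum, one_mul]
      congr 1
      apply Finset.sum_congr rfl
      intro m _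
      simp only [hpdef]; ring
    rw [hdiff]
    calc |∑ m ∈ Finset.range (n+1), p m * (f ((m:ℝ)/n) - f x)|
        ≤ ∑ m ∈ Finset.range (n+1), |p m * (f ((m:ℝ)/n) - f x)| :=
          Finset.abs_sum_le_sum_abs _ _
      _ ≤ ∑ m ∈ Finset.range (n+1), p m * (H * |(m:ℝ)/n - x| ^ α) := by
          apply Finset.sum_le_sum
          intro m hm
          rw [abs_mul, abs_of_nonneg (hpnn m hm)]
          exact mul_le_mul_of_nonneg_left
            (hHolder _ (hmem m hm) x ⟨hx0.le, hx1.le⟩) (hpnn m hm)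
      _ = H * ∑ m ∈ Finset.range (n+1), p m * |(m:ℝ)/n - x| ^ α := by
          rw [Finset.mul_sum]
          apply Finset.sum_congr rfl
          intro m _
          ring
  -- Jensen step
  have hα2 : (1:ℝ) ≤ 2/α := by rw [le_div_iff₀ hα0]; linarith
  have jensen : ∑ m ∈ Finset.range (n+1), p m * |(m:ℝ)/n - x| ^ α
      ≤ (x*(1-x)/n) ^ (α/2) := by
    have h := Real.arith_mean_le_rpow_mean (Finset.range (n+1)) p
      (fun m => |(m:ℝ)/n - x| ^ α) hpnn hsum
      (fun m _ => Real.rpow_nonneg (abs_nonneg _) α) hα2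
    have e1 : ∀ m : ℕ, (|(m:ℝ)/n - x| ^ α) ^ ((2:ℝ)/α) = ((m:ℝ)/n - x)^2 := by
      intro m
      rw [← Real.rpow_mul (abs_nonneg _), mul_div_cancel₀ 2 (ne_of_gt hα0),
        show (2:ℝ) = ((2:ℕ):ℝ) by norm_num, Real.rpow_natCast, sq_abs]
    simp only [e1] at h
    rw [hvar, one_div_div] at h
    exact h
  -- final comparison
  have hvnn : (0:ℝ) ≤ x*(1-x)/n := div_nonneg (mul_nonneg hx0.le (by linarith)) hN.le
  have hv : (0:ℝ) ≤ (x*(1-x)/n) ^ (α/2) := Real.rpow_nonneg hvnn _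
  have hg := gamma_lb (s := α/2) (by linarith) (by linarith)
  have h2 : (2*x*(1-x)/n) ^ (α/2) = 2^(α/2) * (x*(1-x)/n)^(α/2) := by
    rw [show 2*x*(1-x)/n = 2*(x*(1-x)/n) by ring,
      Real.mul_rpow (by norm_num) hvnn]
  have hc : (1:ℝ) ≤ 2^(α/2) := Real.one_le_rpow (by norm_num) (by linarith)
  have hone : (1:ℝ) ≤ 2 * 2^(α/2) * Real.Gamma (α/2) := by nlinarith
  calc |bernsteinPoly n f x - f x|
      ≤ H * ∑ m ∈ Finset.range (n+1), p m * |(m:ℝ)/n - x| ^ α := step1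
    _ ≤ H * (x*(1-x)/n) ^ (α/2) := mul_le_mul_of_nonneg_left jensen hH
    _ ≤ H * (x*(1-x)/n) ^ (α/2) * (2 * 2^(α/2) * Real.Gamma (α/2)) := by
        nlinarith [mul_nonneg hH hv]
    _ = 2 * H * (2*x*(1-x)/n) ^ (α/2) * Real.Gamma (α/2) := by
        rw [h2]; ring
end

section
/- Let f : [0,1] → ℝ be Lipschitz with constant L: |f(s)-f(t)| ≤ L|s-t|. Then for every x ∈ (0,1) and n ≥ 1, |Bₙ[f](x) - f(x)| ≤ 2L√(2π x(1-x)/n). -/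
open Real Finset

lemma bern_sum (n : ℕ) (x : ℝ) :
    ∑ m ∈ Finset.range (n + 1), (n.choose m : ℝ) * x ^ m * (1 - x) ^ (n - m) = 1 := by
  have h := add_pow x (1 - x) n
  simp only [add_sub_cancel, one_pow] at h
  calc ∑ m ∈ Finset.range (n + 1), (n.choose m : ℝ) * x ^ m * (1 - x) ^ (n - m)
      = ∑ m ∈ Finset.range (n + 1), x ^ m * (1 - x) ^ (n - m) * (n.choose m : ℝ) :=
        Finset.sum_congr rfl fun m _ => by ring
    _ = 1 := h.symm

lemma bern_var (n : ℕ) (x : ℝ) :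
    ∑ m ∈ Finset.range (n + 1),
      ((n : ℝ) * x - m) ^ 2 * ((n.choose m : ℝ) * x ^ m * (1 - x) ^ (n - m))
      = n * x * (1 - x) := by
  have h := bernsteinPolynomial.variance ℝ n
  have h2 := congrArg (Polynomial.eval x) h
  simp only [Polynomial.eval_finset_sum, Polynomial.eval_mul, Polynomial.eval_pow,
    Polynomial.eval_sub, Polynomial.eval_smul, Polynomial.eval_X, Polynomial.eval_natCast,
    Polynomial.eval_one, smul_eq_mul, bernsteinPolynomial, nsmul_eq_mul] at h2
  rw [← h2]

theorem bernstein_lipschitz_error_bound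
    (f : ℝ → ℝ) (L : ℝ) (hL : 0 ≤ L)
    (hLip : ∀ s ∈ Set.Icc (0 : ℝ) 1, ∀ t ∈ Set.Icc (0 : ℝ) 1,
      |f s - f t| ≤ L * |s - t|)
    (x : ℝ) (hx : x ∈ Set.Ioo (0 : ℝ) 1) (n : ℕ) (hn : 1 ≤ n) :
    |bernsteinPoly n f x - f x|
      ≤ 2 * L * Real.sqrt (2 * Real.pi * x * (1 - x) / n) := by
  obtain ⟨hx0, hx1⟩ := hx
  have hx0' : (0:ℝ) ≤ x := hx0.le
  have hx1' : x ≤ 1 := hx1.le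
  have hn0 : (0:ℝ) < n := by exact_mod_cast hn
  set p : ℕ → ℝ := fun m => (n.choose m : ℝ) * x ^ m * (1 - x) ^ (n - m) with hp
  have hpnn : ∀ m, 0 ≤ p m := fun m => by
    apply mul_nonneg (mul_nonneg (Nat.cast_nonneg _) (pow_nonneg hx0' _))
    exact pow_nonneg (by linarith) _
  have hsum : ∑ m ∈ Finset.range (n + 1), p m = 1 := bern_sum n x
  have hvar : ∑ m ∈ Finset.range (n + 1), ((m : ℝ) / n - x) ^ 2 * p m
      = x * (1 - x) / n := by
    have h := bern_var n x
    have : ∀ m ∈ Finset.range (n + 1),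
        ((m : ℝ) / n - x) ^ 2 * p m = ((n : ℝ) * x - m) ^ 2 * p m / (n ^ 2) := by
      intro m _
      have hne : (n:ℝ) ≠ 0 := hn0.ne'
      have e : (m:ℝ)/n - x = ((m:ℝ) - (n:ℝ)*x)/(n:ℝ) := by field_simp
      rw [e, div_pow]
      have e2 : ((m:ℝ) - (n:ℝ)*x)^2 = ((n:ℝ)*x - m)^2 := by ring
      rw [e2]; ring
    rw [Finset.sum_congr rfl this, ← Finset.sum_div, h]
    field_simp
  -- error as weighted sum
  have hdiff : bernsteinPoly n f x - f x
      = ∑ m ∈ Finset.range (n + 1), (f ((m : ℝ)/n) - f x) * p m := by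
    have e : ∑ m ∈ Finset.range (n + 1), (f ((m : ℝ)/n) - f x) * p m
        = ∑ m ∈ Finset.range (n + 1),
          ((n.choose m : ℝ) * f ((m : ℝ)/n) * x ^ m * (1 - x) ^ (n - m) - f x * p m) :=
      Finset.sum_congr rfl fun m _ => by simp only [hp]; ring
    rw [e, Finset.sum_sub_distrib, ← Finset.mul_sum, hsum, mul_one]
    rfl
  rw [hdiff]
  have habs : |∑ m ∈ Finset.range (n + 1), (f ((m : ℝ)/n) - f x) * p m|
      ≤ ∑ m ∈ Finset.range (n + 1), L * |(m : ℝ)/n - x| * p m := by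
    refine (Finset.abs_sum_le_sum_abs _ _).trans (Finset.sum_le_sum fun m hm => ?_)
    rw [abs_mul, abs_of_nonneg (hpnn m)]
    have hm' : (m : ℝ) / n ∈ Set.Icc (0:ℝ) 1 := by
      constructor
      · positivity
      · rw [div_le_one hn0]
        exact_mod_cast Nat.lt_succ_iff.mp (Finset.mem_range.mp hm)
    exact mul_le_mul_of_nonneg_right
      (hLip _ hm' x ⟨hx0', hx1'⟩) (hpnn m)
  refine habs.trans ?_
  -- Cauchy-Schwarz
  have hCS : ∑ m ∈ Finset.range (n + 1), |(m : ℝ)/n - x| * p m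
      ≤ Real.sqrt (x * (1 - x) / n) := by
    have key2 : (∑ m ∈ Finset.range (n + 1),
        (|(m : ℝ)/n - x| * Real.sqrt (p m)) * Real.sqrt (p m)) ^ 2
        ≤ (∑ m ∈ Finset.range (n + 1), (|(m : ℝ)/n - x| * Real.sqrt (p m)) ^ 2)
          * ∑ m ∈ Finset.range (n + 1), Real.sqrt (p m) ^ 2 :=
      Finset.sum_mul_sq_le_sq_mul_sq _ _ _
    have e1 : ∀ m : ℕ, (|(m : ℝ)/n - x| * Real.sqrt (p m)) * Real.sqrt (p m)
        = |(m : ℝ)/n - x| * p m := fun m => by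
      rw [mul_assoc, Real.mul_self_sqrt (hpnn m)]
    have e2 : ∀ m : ℕ, (|(m : ℝ)/n - x| * Real.sqrt (p m)) ^ 2
        = ((m : ℝ)/n - x) ^ 2 * p m := fun m => by
      rw [mul_pow, sq_abs, Real.sq_sqrt (hpnn m)]
    have e3 : ∀ m : ℕ, Real.sqrt (p m) ^ 2 = p m := fun m => Real.sq_sqrt (hpnn m)
    simp only [e1, e2, e3, hsum, hvar, mul_one] at key2
    have hnn : 0 ≤ ∑ m ∈ Finset.range (n + 1), |(m : ℝ)/n - x| * p m :=
      Finset.sum_nonneg fun m _ => mul_nonneg (abs_nonneg _) (hpnn m)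
    calc ∑ m ∈ Finset.range (n + 1), |(m : ℝ)/n - x| * p m
        = Real.sqrt ((∑ m ∈ Finset.range (n + 1), |(m : ℝ)/n - x| * p m) ^ 2) :=
          (Real.sqrt_sq hnn).symm
      _ ≤ Real.sqrt (x * (1 - x) / n) := Real.sqrt_le_sqrt key2
  calc ∑ m ∈ Finset.range (n + 1), L * |(m : ℝ)/n - x| * p m
      = L * ∑ m ∈ Finset.range (n + 1), |(m : ℝ)/n - x| * p m := by
        rw [Finset.mul_sum]; exact Finset.sum_congr rfl fun m _ => by ring
    _ ≤ L * Real.sqrt (x * (1 - x) / n) := by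
        exact mul_le_mul_of_nonneg_left hCS hL
    _ ≤ 2 * L * Real.sqrt (2 * Real.pi * x * (1 - x) / n) := by
        have h1 : x * (1 - x) / n ≤ 2 * Real.pi * x * (1 - x) / n := by
          have hpi : (1:ℝ) ≤ 2 * Real.pi := by nlinarith [Real.pi_gt_three]
          have hxx : (0:ℝ) ≤ x * (1 - x) := mul_nonneg hx0' (by linarith)
          have h0 : x * (1 - x) ≤ 2 * Real.pi * x * (1 - x) := by nlinarith
          calc x * (1 - x) / ↑n ≤ 2 * Real.pi * x * (1 - x) / ↑n :=
                (div_le_div_iff_of_pos_right hn0).2 h0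
            _ = 2 * Real.pi * x * (1 - x) / ↑n := by ring
        have h2 := Real.sqrt_le_sqrt h1
        nlinarith [Real.sqrt_nonneg (2 * Real.pi * x * (1 - x) / n), hL,
          mul_le_mul_of_nonneg_left h2 hL]
end
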